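/- Let n > m > 1 and let σ = (1,2,…,m) and ω = (1,m+1,…,n) be cycles in the symmetric group S_n. Then the alternating group A_n is contained in the commutator subgroup of the subgroup generated by σ and ω. -/

import Mathlib

open Equiv Equiv.Perm Subgroup
open commutatorElement Fin.NatCast Fin.CommRing

private lemma aux_cyc_rot {α : Type*} [DecidableEq α] {a b c : α}
    (hab : a ≠ b) (hac : a ≠ c) (hbc : b ≠ c) :
    swap a b * swap b c = swap b c * swap c a := by
  ext y
  simp only [Equiv.Perm.mul_apply, Equiv.swap_apply_def]
  split_ifs <;> simp_all

private lemma aux_cyc_inv {α : Type*} [DecidableEq α] {a b c : α}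
    (hab : a ≠ b) (hac : a ≠ c) (hbc : b ≠ c) :
    (swap a b * swap b c)⁻¹ = swap a c * swap c b := by
  ext y
  simp only [Equiv.Perm.mul_apply, mul_inv_rev, Equiv.swap_inv, Equiv.swap_apply_def]
  split_ifs <;> simp_all

set_option maxHeartbeats 1000000 in
private lemma aux_cyc_comb {α : Type*} [DecidableEq α] {a b c x : α}
    (hab : a ≠ b) (hac : a ≠ c) (hax : a ≠ x)
    (hbc : b ≠ c) (hbx : b ≠ x) (hcx : c ≠ x) :
    swap a b * swap b c = (swap a b * swap b x) * (swap c x * swap x b) := by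
  ext y
  by_cases h1 : y = a <;> by_cases h2 : y = b <;> by_cases h3 : y = c <;> by_cases h4 : y = x <;>
    subst_vars <;>
    simp_all [Equiv.Perm.mul_apply, swap_apply_of_ne_of_ne, swap_apply_left, swap_apply_right,
      Ne.symm]

private lemma aux_threeCycle_decomp {α : Type*} [DecidableEq α] [Fintype α] {f : Perm α}
    (hf : f.IsThreeCycle) :
    ∃ a b c : α, a ≠ b ∧ a ≠ c ∧ b ≠ c ∧ f = swap a b * swap b c := by
  have h3 : f.support.card = 3 := hf.card_support
  obtain ⟨a, ha⟩ : f.support.Nonempty := Finset.card_pos.mp (by omega)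
  have hfa : f a ≠ a := Equiv.Perm.mem_support.mp ha
  have hb : f a ∈ f.support := Equiv.Perm.apply_mem_support.mpr ha
  have hc : f (f a) ∈ f.support := Equiv.Perm.apply_mem_support.mpr hb
  have hord : f ^ 3 = 1 := by rw [← hf.orderOf]; exact pow_orderOf_eq_one f
  have hffa : f (f (f a)) = a := by
    have := congrArg (fun g : Perm α => g a) hord
    simpa [pow_succ, Equiv.Perm.mul_apply] using this
  have hab : a ≠ f a := hfa.symm
  have hbc : f a ≠ f (f a) := (Equiv.Perm.mem_support.mp hb).symm
  have hac : a ≠ f (f a) := by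
    intro h
    apply hfa
    calc f a = f (f (f a)) := by rw [← h]
    _ = a := hffa
  have hsupp : f.support = {a, f a, f (f a)} := by
    symm
    apply Finset.eq_of_subset_of_card_le
    · intro y hy
      simp only [Finset.mem_insert, Finset.mem_singleton] at hy
      rcases hy with rfl | rfl | rfl <;> assumption
    · rw [h3]
      apply le_of_eq
      rw [Finset.card_insert_of_notMem (by simp [hab, hac]),
        Finset.card_insert_of_notMem (by simp [hbc]), Finset.card_singleton]
  refine ⟨a, f a, f (f a), hab, hac, hbc, ?_⟩
  ext y
  by_cases h1 : y = a
  · subst h1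
    rw [Equiv.Perm.mul_apply, swap_apply_of_ne_of_ne hab hac, swap_apply_left]
  · by_cases h2 : y = f a
    · subst h2
      rw [Equiv.Perm.mul_apply, swap_apply_left, swap_apply_of_ne_of_ne (Ne.symm hac) (Ne.symm hbc)]
    · by_cases h3' : y = f (f a)
      · subst h3'
        rw [Equiv.Perm.mul_apply, swap_apply_right, swap_apply_right, hffa]
      · have : y ∉ f.support := by simp [hsupp, h1, h2, h3']
        rw [Equiv.Perm.notMem_support.mp this, Equiv.Perm.mul_apply,
          swap_apply_of_ne_of_ne h2 h3', swap_apply_of_ne_of_ne h1 h2]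


theorem alternating_le_commutator_of_two_cycles
    (n m : ℕ) (hm : 1 < m) (hn : m < n)
    (σ ω : Equiv.Perm (Fin n))
    (hσ : ∀ i : Fin n, ((σ i : ℕ)) =
      if (i : ℕ) + 1 < m then (i : ℕ) + 1 else if (i : ℕ) + 1 = m then 0 else (i : ℕ))
    (hω : ∀ i : Fin n, ((ω i : ℕ)) =
      if (i : ℕ) = 0 then m else if (i : ℕ) < m then (i : ℕ)
      else if (i : ℕ) + 1 < n then (i : ℕ) + 1 else 0) :
    alternatingGroup (Fin n) ≤
      ⁅Subgroup.closure {σ, ω}, Subgroup.closure {σ, ω}⁆ := by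
  obtain ⟨K, rfl⟩ : ∃ K, n = K + 3 := ⟨n - 3, by omega⟩
  -- basic val facts
  have hval1 : ((1 : Fin (K + 3)) : ℕ) = 1 := Fin.val_one _
  have hval0 : ((0 : Fin (K + 3)) : ℕ) = 0 := rfl
  have hv1 : ∀ x : Fin (K + 3), (x : ℕ) + 1 < K + 3 → ((x + 1 : Fin (K + 3)) : ℕ) = (x : ℕ) + 1 := by
    intro x hx
    rw [Fin.val_add, hval1, Nat.mod_eq_of_lt hx]
  have hvlast : ∀ x : Fin (K + 3), (x : ℕ) = K + 2 → ((x + 1 : Fin (K + 3)) : ℕ) = 0 := by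
    intro x hx
    rw [Fin.val_add, hval1, hx, show K + 2 + 1 = K + 3 from rfl, Nat.mod_self]
  have h01 : (0 : Fin (K + 3)) ≠ 1 := by
    intro h
    have := congrArg Fin.val h
    rw [hval0, hval1] at this
    omega
  have hne_succ : ∀ x : Fin (K + 3), x ≠ x + 1 := by
    intro x h
    exact h01 (add_left_cancel (a := x) (by rw [add_zero]; exact h))
  have hvne : ∀ x y : Fin (K + 3), (x : ℕ) ≠ (y : ℕ) → x ≠ y := by
    intro x y h hxy
    exact h (congrArg Fin.val hxy)
  set M : Fin (K + 3) := ⟨m, hn⟩ with hM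
  have hvalM : (M : ℕ) = m := rfl
  -- sigma point lemmas
  have hσlt : ∀ x : Fin (K + 3), (x : ℕ) + 1 < m → σ x = x + 1 := by
    intro x h
    have h2 := hσ x
    rw [if_pos h] at h2
    exact Fin.ext (h2.trans (hv1 x (by omega)).symm)
  have hσeq : ∀ x : Fin (K + 3), (x : ℕ) + 1 = m → σ x = 0 := by
    intro x h
    have h2 := hσ x
    rw [if_neg (by omega), if_pos h] at h2
    exact Fin.ext (h2.trans hval0.symm)
  have hσge : ∀ x : Fin (K + 3), m ≤ (x : ℕ) → σ x = x := by
    intro x h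
    have h2 := hσ x
    rw [if_neg (by omega), if_neg (by omega)] at h2
    exact Fin.ext h2
  -- omega point lemmas
  have hω0 : ω 0 = M := by
    have h2 := hω 0
    rw [hval0, if_pos rfl] at h2
    exact Fin.ext (h2.trans hvalM.symm)
  have hωmid : ∀ x : Fin (K + 3), (x : ℕ) ≠ 0 → (x : ℕ) < m → ω x = x := by
    intro x h0 h1
    have h2 := hω x
    rw [if_neg h0, if_pos h1] at h2
    exact Fin.ext h2
  have hωge : ∀ x : Fin (K + 3), m ≤ (x : ℕ) → ω x = x + 1 := by
    intro x h
    have h2 := hω x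
    rw [if_neg (by omega), if_neg (by omega)] at h2
    rcases Nat.lt_or_ge ((x : ℕ) + 1) (K + 3) with h3 | h3
    · rw [if_pos h3] at h2
      exact Fin.ext (h2.trans (hv1 x h3).symm)
    · have hx : (x : ℕ) = K + 2 := by have := x.isLt; omega
      rw [if_neg (by omega)] at h2
      exact Fin.ext (h2.trans (hvlast x hx).symm)
  -- the n-cycle
  have hc : ∀ x : Fin (K + 3), (ω * σ) x = x + 1 := by
    intro x
    rcases lt_trichotomy ((x : ℕ) + 1) m with h | h | h
    · have hv : ((x + 1 : Fin (K + 3)) : ℕ) = (x : ℕ) + 1 := hv1 x (by omega)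
      rw [Equiv.Perm.mul_apply, hσlt x h, hωmid (x + 1) (by omega) (by omega)]
    · rw [Equiv.Perm.mul_apply, hσeq x h, hω0]
      exact Fin.ext (by rw [hvalM, hv1 x (by omega)]; omega)
    · rw [Equiv.Perm.mul_apply, hσge x (by omega), hωge x (by omega)]
  -- T = the 3-cycle (0 1 M)
  set T : Equiv.Perm (Fin (K + 3)) := Equiv.swap 0 1 * Equiv.swap 1 M with hTdef
  have hM0 : M ≠ 0 := hvne M 0 (by rw [hvalM, hval0]; omega)
  have hM1 : M ≠ 1 := hvne M 1 (by rw [hvalM, hval1]; omega)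
  have hT0 : T 0 = 1 := by
    rw [hTdef, Equiv.Perm.mul_apply, swap_apply_of_ne_of_ne h01 (Ne.symm hM0), swap_apply_left]
  have hT1 : T 1 = M := by
    rw [hTdef, Equiv.Perm.mul_apply, swap_apply_left, swap_apply_of_ne_of_ne hM0 hM1]
  have hTM : T M = 0 := by
    rw [hTdef, Equiv.Perm.mul_apply, swap_apply_right, swap_apply_right]
  have hTother : ∀ y : Fin (K + 3), (y : ℕ) ≠ 0 → (y : ℕ) ≠ 1 → (y : ℕ) ≠ m → T y = y := by
    intro y a b c
    rw [hTdef, Equiv.Perm.mul_apply,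
      swap_apply_of_ne_of_ne (hvne y 1 (by rw [hval1]; omega)) (hvne y M (by rw [hvalM]; omega)),
      swap_apply_of_ne_of_ne (hvne y 0 (by rw [hval0]; omega)) (hvne y 1 (by rw [hval1]; omega))]
  -- key identity : σ * ω = T * (ω * σ)
  have hkey : σ * ω = T * (ω * σ) := by
    ext x
    rw [Equiv.Perm.mul_apply, Equiv.Perm.mul_apply, hc x]
    rcases Nat.eq_zero_or_pos (x : ℕ) with h0 | h0
    · have hx0 : x = 0 := Fin.ext (by rw [hval0]; omega)
      subst hx0
      rw [hω0, hσge M (le_of_eq hvalM.symm), zero_add, hT1]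
    · rcases Nat.lt_or_ge (x : ℕ) m with h1 | h1
      · rw [hωmid x (by omega) h1]
        rcases lt_trichotomy ((x : ℕ) + 1) m with h2 | h2 | h2
        · have hv : ((x + 1 : Fin (K + 3)) : ℕ) = (x : ℕ) + 1 := hv1 x (by omega)
          rw [hσlt x h2, hTother (x + 1) (by omega) (by omega) (by omega)]
        · have hxM : x + 1 = M := Fin.ext (by rw [hvalM, hv1 x (by omega)]; omega)
          rw [hσeq x h2, hxM, hTM]
        · omega
      · rw [hωge x h1]
        rcases Nat.lt_or_ge ((x : ℕ) + 1) (K + 3) with h2 | h2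
        · have hv : ((x + 1 : Fin (K + 3)) : ℕ) = (x : ℕ) + 1 := hv1 x h2
          rw [hσge (x + 1) (by omega), hTother (x + 1) (by omega) (by omega) (by omega)]
        · have hx : (x : ℕ) = K + 2 := by have := x.isLt; omega
          have hx1 : x + 1 = 0 := Fin.ext (by rw [hvlast x hx, hval0])
          rw [hx1, hT0, hσlt 0 (by rw [hval0]; omega), zero_add]
  have hT : ⁅σ, ω⁆ = T := by
    rw [commutatorElement_def, hkey]
    group
  set Gp := Subgroup.closure {σ, ω} with hGp
  have hσG : σ ∈ Gp := Subgroup.subset_closure (Set.mem_insert _ _)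
  have hωG : ω ∈ Gp := Subgroup.subset_closure (Set.mem_insert_of_mem _ rfl)
  have hCGle : ⁅Gp, Gp⁆ ≤ Gp := by
    rw [Subgroup.commutator_le]
    intro p hp q hq
    rw [commutatorElement_def]
    exact mul_mem (mul_mem (mul_mem hp hq) (inv_mem hp)) (inv_mem hq)
  have hconjmem : ∀ g : Equiv.Perm (Fin (K + 3)), g ∈ Gp → ∀ y, y ∈ ⁅Gp, Gp⁆ →
      g * y * g⁻¹ ∈ ⁅Gp, Gp⁆ := by
    intro g hg y hy
    have h1 : ⁅g, y⁆ ∈ ⁅Gp, Gp⁆ := Subgroup.commutator_mem_commutator hg (hCGle hy)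
    have h2 : g * y * g⁻¹ = ⁅g, y⁆ * y := by group
    rw [h2]
    exact mul_mem h1 hy
  have hPconj : ∀ g : Equiv.Perm (Fin (K + 3)), g ∈ Gp → ∀ a b c : Fin (K + 3),
      swap a b * swap b c ∈ ⁅Gp, Gp⁆ → swap (g a) (g b) * swap (g b) (g c) ∈ ⁅Gp, Gp⁆ := by
    intro g hg a b c h
    rw [swap_apply_apply, swap_apply_apply]
    have e : (g * swap a b * g⁻¹) * (g * swap b c * g⁻¹) = g * (swap a b * swap b c) * g⁻¹ := by
      group
    rw [e]
    exact hconjmem g hg _ h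
  have hProt : ∀ a b c : Fin (K + 3), a ≠ b → a ≠ c → b ≠ c →
      swap a b * swap b c ∈ ⁅Gp, Gp⁆ → swap b c * swap c a ∈ ⁅Gp, Gp⁆ := by
    intro a b c hab hac hbc h
    rwa [← aux_cyc_rot hab hac hbc]
  have hPswap : ∀ a b c : Fin (K + 3), a ≠ b → a ≠ c → b ≠ c →
      swap a b * swap b c ∈ ⁅Gp, Gp⁆ → swap a c * swap c b ∈ ⁅Gp, Gp⁆ := by
    intro a b c hab hac hbc h
    have h2 := inv_mem h
    rwa [aux_cyc_inv hab hac hbc] at h2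
  have hPcomb : ∀ a b c x : Fin (K + 3), a ≠ b → a ≠ c → a ≠ x → b ≠ c → b ≠ x → c ≠ x →
      swap a b * swap b x ∈ ⁅Gp, Gp⁆ → swap b c * swap c x ∈ ⁅Gp, Gp⁆ →
      swap a b * swap b c ∈ ⁅Gp, Gp⁆ := by
    intro a b c x hab hac hax hbc hbx hcx h1 h2
    rw [aux_cyc_comb hab hac hax hbc hbx hcx]
    refine mul_mem h1 ?_
    rwa [← aux_cyc_rot hbc hbx hcx]
  have hseed : swap (0 : Fin (K + 3)) 1 * swap 1 M ∈ ⁅Gp, Gp⁆ := by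
    rw [← hTdef, ← hT]
    exact Subgroup.commutator_mem_commutator hσG hωG
  have hρpow : ∀ (k : ℕ) (x : Fin (K + 3)), ((ω * σ) ^ k) x = x + (k : Fin (K + 3)) := by
    intro k
    induction k with
    | zero => intro x; simp
    | succ k ih =>
      intro x
      rw [pow_succ, Equiv.Perm.mul_apply, hc x, ih (x + 1)]
      push_cast
      ring
  have hshift : ∀ (s : Fin (K + 3)) (a b c : Fin (K + 3)),
      swap a b * swap b c ∈ ⁅Gp, Gp⁆ →
      swap (a + s) (b + s) * swap (b + s) (c + s) ∈ ⁅Gp, Gp⁆ := by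
    intro s a b c h
    have hg : (ω * σ) ^ (s : ℕ) ∈ Gp := pow_mem (mul_mem hωG hσG) _
    have h2 := hPconj _ hg a b c h
    rw [hρpow, hρpow, hρpow, Fin.cast_val_eq_self] at h2
    exact h2
  have hMcast : ((m : ℕ) : Fin (K + 3)) = M := by
    refine Fin.ext ?_
    rw [Fin.val_natCast, hvalM, Nat.mod_eq_of_lt hn]
  -- the U family : 3-cycles (j, j+1, m) for j ≤ m - 2
  have hU : ∀ j : ℕ, j + 2 ≤ m →
      swap ((j : Fin (K + 3))) ((j : Fin (K + 3)) + 1) * swap ((j : Fin (K + 3)) + 1) M ∈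
        ⁅Gp, Gp⁆ := by
    intro j
    induction j with
    | zero => intro _; simpa using hseed
    | succ j ih =>
      intro h
      have hvj : ((j : Fin (K + 3)) : ℕ) = j := by
        rw [Fin.val_natCast, Nat.mod_eq_of_lt (by omega)]
      have hvj1 := hv1 (j : Fin (K + 3)) (by rw [hvj]; omega)
      rw [hvj] at hvj1
      have e1 : σ (j : Fin (K + 3)) = (j : Fin (K + 3)) + 1 := hσlt _ (by rw [hvj]; omega)
      have e2 : σ ((j : Fin (K + 3)) + 1) = (j : Fin (K + 3)) + 1 + 1 :=
        hσlt _ (by rw [hvj1]; omega)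
      have e3 : σ M = M := hσge M (le_of_eq hvalM.symm)
      have h2 := hPconj σ hσG _ _ _ (ih (by omega))
      rw [e1, e2, e3] at h2
      have ecast : ((j + 1 : ℕ) : Fin (K + 3)) = (j : Fin (K + 3)) + 1 := by
        push_cast
        ring
      rw [ecast]
      exact h2
  -- the V family : 3-cycles (1, j+1, j) for m ≤ j ≤ n - 1
  have hV : ∀ (j : ℕ) (hj : m ≤ j), j ≤ K + 2 →
      swap (1 : Fin (K + 3)) ((j : Fin (K + 3)) + 1) * swap ((j : Fin (K + 3)) + 1)
        (j : Fin (K + 3)) ∈ ⁅Gp, Gp⁆ := by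
    intro j hj
    induction j, hj using Nat.le_induction with
    | base =>
      intro _
      have e1 : ω 1 = 1 := hωmid 1 (by rw [hval1]; exact one_ne_zero) (by rw [hval1]; omega)
      have e2 : ω M = M + 1 := hωge M (le_of_eq hvalM.symm)
      have h2 := hPconj ω hωG 0 1 M hseed
      rw [hω0, e1, e2] at h2
      have h1M : (1 : Fin (K + 3)) ≠ M + 1 := by
        intro h
        have h' : (0 : Fin (K + 3)) + 1 = M + 1 := by rw [zero_add]; exact h
        exact hM0 (add_right_cancel h').symm
      have h3 := hProt M 1 (M + 1) hM1 (hne_succ M) h1M h2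
      rw [hMcast]
      exact h3
    | succ j hj ih =>
      intro h2
      have hvj : ((j : Fin (K + 3)) : ℕ) = j := by
        rw [Fin.val_natCast, Nat.mod_eq_of_lt (by omega)]
      have hvj1 := hv1 (j : Fin (K + 3)) (by rw [hvj]; omega)
      rw [hvj] at hvj1
      have e1 : ω 1 = 1 := hωmid 1 (by rw [hval1]; exact one_ne_zero) (by rw [hval1]; omega)
      have e2 : ω (j : Fin (K + 3)) = (j : Fin (K + 3)) + 1 := hωge _ (by rw [hvj]; omega)
      have e3 : ω ((j : Fin (K + 3)) + 1) = (j : Fin (K + 3)) + 1 + 1 :=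
        hωge _ (by rw [hvj1]; omega)
      have h3 := hPconj ω hωG _ _ _ (ih (by omega))
      rw [e1, e2, e3] at h3
      have ecast : ((j + 1 : ℕ) : Fin (K + 3)) = (j : Fin (K + 3)) + 1 := by
        push_cast
        ring
      rw [ecast]
      exact h3
  have hK4 : ((K + 4 : ℕ) : Fin (K + 3)) = 1 := by
    rw [show K + 4 = (K + 3) + 1 from rfl, Nat.cast_add, Nat.cast_one, Fin.natCast_self, zero_add]
  have hQ : ∀ d : ℕ, 2 ≤ d → d ≤ K + 2 → ∀ a : Fin (K + 3),
      swap a (a + 1) * swap (a + 1) (a + (d : Fin (K + 3))) ∈ ⁅Gp, Gp⁆ := by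
    intro d
    induction d using Nat.strong_induction_on with
    | _ d IH =>
      intro hd2 hdK a
      by_cases hdm : d ≤ m
      · -- from the U family, shifted
        have hUj := hU (m - d) (by omega)
        have h2 := hshift (a - ((m - d : ℕ) : Fin (K + 3))) _ _ _ hUj
        have e1 : ((m - d : ℕ) : Fin (K + 3)) + (a - ((m - d : ℕ) : Fin (K + 3))) = a := by ring
        have e2 : ((m - d : ℕ) : Fin (K + 3)) + 1 + (a - ((m - d : ℕ) : Fin (K + 3))) = a + 1 := by
          ring
        have e3 : M + (a - ((m - d : ℕ) : Fin (K + 3))) = a + (d : Fin (K + 3)) := by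
          rw [← hMcast, show ((m : ℕ) : Fin (K + 3)) = ((m - d : ℕ) : Fin (K + 3)) +
            (d : Fin (K + 3)) by rw [← Nat.cast_add]; congr 1; omega]
          ring
        rw [e1, e2, e3] at h2
        exact h2
      · by_cases hdV : d ≤ K + 4 - m
        · -- from the V family, shifted
          have hj1 : m ≤ K + 4 - d := by omega
          have hj2 : K + 4 - d ≤ K + 2 := by omega
          have hVj := hV (K + 4 - d) hj1 hj2
          have hvj : (((K + 4 - d : ℕ) : Fin (K + 3)) : ℕ) = K + 4 - d := by
            rw [Fin.val_natCast, Nat.mod_eq_of_lt (by omega)]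
          have h1j : (1 : Fin (K + 3)) ≠ ((K + 4 - d : ℕ) : Fin (K + 3)) :=
            hvne _ _ (by rw [hval1, hvj]; omega)
          have h1j1 : (1 : Fin (K + 3)) ≠ ((K + 4 - d : ℕ) : Fin (K + 3)) + 1 := by
            rcases Nat.lt_or_ge (K + 4 - d + 1) (K + 3) with h | h
            · have t := hv1 _ (by rw [hvj]; omega)
              rw [hvj] at t
              exact hvne _ _ (by rw [hval1, t]; omega)
            · have t := hvlast _ (by rw [hvj]; omega)
              exact hvne _ _ (by rw [hval1, t]; omega)
          have s1 := hPswap _ _ _ h1j1 h1j (hne_succ _).symm hVj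
          have s2 := hProt _ _ _ h1j h1j1 (hne_succ _) s1
          have h2 := hshift (a - ((K + 4 - d : ℕ) : Fin (K + 3))) _ _ _ s2
          have hjd : ((K + 4 - d : ℕ) : Fin (K + 3)) + (d : Fin (K + 3)) = 1 := by
            rw [← Nat.cast_add, show K + 4 - d + d = K + 4 from by omega, hK4]
          have e1 : ((K + 4 - d : ℕ) : Fin (K + 3)) +
              (a - ((K + 4 - d : ℕ) : Fin (K + 3))) = a := by ring
          have e2 : ((K + 4 - d : ℕ) : Fin (K + 3)) + 1 +
              (a - ((K + 4 - d : ℕ) : Fin (K + 3))) = a + 1 := by ring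
          have e3 : (1 : Fin (K + 3)) + (a - ((K + 4 - d : ℕ) : Fin (K + 3))) =
              a + (d : Fin (K + 3)) := by
            rw [← hjd]; ring
          rw [e1, e2, e3] at h2
          exact h2
        · -- inductive step, combining offsets d - 1 and K + 5 - d
          have hIH1 := IH (d - 1) (by omega) (by omega) (by omega) a
          have hIH2 := IH (K + 5 - d) (by omega) (by omega) (by omega)
            (a + ((d - 1 : ℕ) : Fin (K + 3)))
          have hvd : ((d : Fin (K + 3)) : ℕ) = d := by
            rw [Fin.val_natCast, Nat.mod_eq_of_lt (by omega)]
          have hvd1 : (((d - 1 : ℕ) : Fin (K + 3)) : ℕ) = d - 1 := by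
            rw [Fin.val_natCast, Nat.mod_eq_of_lt (by omega)]
          have eX1 : a + ((d - 1 : ℕ) : Fin (K + 3)) + 1 = a + (d : Fin (K + 3)) := by
            rw [add_assoc, show (((d - 1 : ℕ) : Fin (K + 3)) + 1) = (d : Fin (K + 3)) by
              rw [show (1 : Fin (K + 3)) = ((1 : ℕ) : Fin (K + 3)) from Nat.cast_one.symm,
                ← Nat.cast_add, show d - 1 + 1 = d from by omega]]
          have eXe : a + ((d - 1 : ℕ) : Fin (K + 3)) + ((K + 5 - d : ℕ) : Fin (K + 3)) =
              a + 1 := by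
            rw [add_assoc, ← Nat.cast_add, show d - 1 + (K + 5 - d) = K + 4 from by omega, hK4]
          rw [eX1, eXe] at hIH2
          have hcan : ∀ u v : Fin (K + 3), ((u : ℕ) ≠ (v : ℕ)) → a + u ≠ a + v := by
            intro u v h hh
            exact h (congrArg Fin.val (add_left_cancel hh))
          have n01 : a ≠ a + 1 := hne_succ a
          have n0d : a ≠ a + (d : Fin (K + 3)) := by
            have h' := hcan 0 ((d : ℕ) : Fin (K + 3)) (by rw [hval0, hvd]; omega)
            rwa [add_zero] at h'
          have n0X : a ≠ a + ((d - 1 : ℕ) : Fin (K + 3)) := by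
            have h' := hcan 0 ((d - 1 : ℕ) : Fin (K + 3)) (by rw [hval0, hvd1]; omega)
            rwa [add_zero] at h'
          have n1d : a + 1 ≠ a + (d : Fin (K + 3)) := hcan 1 _ (by rw [hval1, hvd]; omega)
          have n1X : a + 1 ≠ a + ((d - 1 : ℕ) : Fin (K + 3)) :=
            hcan 1 _ (by rw [hval1, hvd1]; omega)
          have ndX : a + (d : Fin (K + 3)) ≠ a + ((d - 1 : ℕ) : Fin (K + 3)) :=
            hcan _ _ (by rw [hvd, hvd1]; omega)
          have step1 := hProt _ _ _ ndX.symm n1X.symm n1d.symm hIH2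
          have step2 := hProt _ _ _ n1d.symm ndX n1X step1
          have step3 := hPswap _ _ _ n1X n1d ndX.symm step2
          exact hPcomb a (a + 1) (a + (d : Fin (K + 3))) (a + ((d - 1 : ℕ) : Fin (K + 3)))
            n01 n0d n0X n1d n1X ndX hIH1 step3
  have hR : ∀ a b : Fin (K + 3), b ≠ a → b ≠ a + 1 →
      swap a (a + 1) * swap (a + 1) b ∈ ⁅Gp, Gp⁆ := by
    intro a b h0 h1
    have hd : b = a + (((b - a : Fin (K + 3)) : ℕ) : Fin (K + 3)) := by
      rw [Fin.cast_val_eq_self]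
      ring
    have hd0 : ((b - a : Fin (K + 3)) : ℕ) ≠ 0 := by
      intro h
      exact h0 (sub_eq_zero.mp (Fin.ext (by rw [h, hval0])))
    have hd1 : ((b - a : Fin (K + 3)) : ℕ) ≠ 1 := by
      intro h
      apply h1
      have h2 : b - a = 1 := Fin.ext (by rw [h, hval1])
      rw [← h2]
      ring
    have h3 := hQ ((b - a : Fin (K + 3)) : ℕ) (by omega)
      (by have := (b - a).isLt; omega) a
    rw [← hd] at h3
    exact h3
  have hPall : ∀ a b c : Fin (K + 3), a ≠ b → a ≠ c → b ≠ c →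
      swap a b * swap b c ∈ ⁅Gp, Gp⁆ := by
    intro a b c hab hac hbc
    by_cases h1 : b = a + 1
    · subst h1
      exact hR a c (Ne.symm hac) (Ne.symm hbc)
    · by_cases h2 : c = a + 1
      · subst h2
        exact hPswap a (a + 1) b (hne_succ a) hab (Ne.symm h1) (hR a b (Ne.symm hab) h1)
      · have na1b : a + 1 ≠ b := fun h => h1 h.symm
        have na1c : a + 1 ≠ c := fun h => h2 h.symm
        have hb' := hR a b (Ne.symm hab) h1
        have hc' := hR a c (Ne.symm hac) h2
        have r1 := hProt a (a + 1) b (hne_succ a) hab na1b hb'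
        have r2 := hProt (a + 1) b a na1b (hne_succ a).symm (Ne.symm hab) r1
        have s1 := hPswap a (a + 1) c (hne_succ a) hac na1c hc'
        have comb := hPcomb b a c (a + 1) (Ne.symm hab) hbc h1 hac (hne_succ a) h2 r2 s1
        have t1 := hPswap b a c (Ne.symm hab) hbc hac comb
        have t2 := hProt b c a hbc (Ne.symm hab) (Ne.symm hac) t1
        exact hProt c a b (Ne.symm hac) (Ne.symm hbc) hab t2
  intro f hf
  have hf3 : f ∈ Subgroup.closure {g : Equiv.Perm (Fin (K + 3)) | g.IsThreeCycle} := by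
    rw [Equiv.Perm.closure_three_cycles_eq_alternating]
    exact hf
  refine (Subgroup.closure_le _).mpr ?_ hf3
  rintro g hg
  obtain ⟨a, b, c, hab, hac, hbc, rfl⟩ := aux_threeCycle_decomp hg
  exact hPall a b c hab hac hbc
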